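/- The attractor of the iterated function system {S₀(x)=x/3, S₁(x)=x/6+1/3, S₂(x)=−x/6+2/3, S₃(x)=x/3+2/3} is the interval [0,1]; that is, [0,1] is the unique nonempty compact set K with K = S₀(K) ∪ S₁(K) ∪ S₂(K) ∪ S₃(K). -/
import Mathlib


noncomputable def kochIFS : Fin 4 → ℝ → ℝ :=
  ![fun x => x / 3, fun x => x / 6 + 1/3, fun x => -x / 6 + 2/3, fun x => x / 3 + 2/3]

lemma kochIFS_zero (y : ℝ) : kochIFS 0 y = y/3 := rfl
lemma kochIFS_one (y : ℝ) : kochIFS 1 y = y/6 + 1/3 := rfl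
lemma kochIFS_two (y : ℝ) : kochIFS 2 y = -y/6 + 2/3 := rfl
lemma kochIFS_three (y : ℝ) : kochIFS 3 y = y/3 + 2/3 := rfl

lemma koch_self : Set.Icc (0 : ℝ) 1 = ⋃ i : Fin 4, kochIFS i '' Set.Icc (0 : ℝ) 1 := by
  ext t
  simp only [Set.mem_iUnion, Set.mem_image, Set.mem_Icc]
  constructor
  · rintro ⟨h0, h1⟩
    rcases le_or_gt t (1/3) with h | h
    · exact ⟨0, 3*t, ⟨by linarith, by linarith⟩, by rw [kochIFS_zero]; ring⟩
    rcases le_or_gt t (1/2) with h' | h'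
    · exact ⟨1, 6*t - 2, ⟨by linarith, by linarith⟩, by rw [kochIFS_one]; ring⟩
    rcases le_or_gt t (2/3) with h'' | h''
    · exact ⟨2, 4 - 6*t, ⟨by linarith, by linarith⟩, by rw [kochIFS_two]; ring⟩
    · exact ⟨3, 3*t - 2, ⟨by linarith, by linarith⟩, by rw [kochIFS_three]; ring⟩
  · rintro ⟨i, x, ⟨hx0, hx1⟩, rfl⟩
    fin_cases i
    · rw [show (⟨0, by omega⟩ : Fin 4) = 0 from rfl, kochIFS_zero]
      constructor <;> linarith
    · rw [show (⟨1, by omega⟩ : Fin 4) = 1 from rfl, kochIFS_one]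
      constructor <;> linarith
    · rw [show (⟨2, by omega⟩ : Fin 4) = 2 from rfl, kochIFS_two]
      constructor <;> linarith
    · rw [show (⟨3, by omega⟩ : Fin 4) = 3 from rfl, kochIFS_three]
      constructor <;> linarith

theorem koch_ifs_attractor :
    (Set.Icc (0 : ℝ) 1 = ⋃ i : Fin 4, kochIFS i '' Set.Icc (0 : ℝ) 1) ∧
      ∀ K : Set ℝ, K.Nonempty → IsCompact K →
        K = (⋃ i : Fin 4, kochIFS i '' K) → K = Set.Icc (0 : ℝ) 1 := by
  refine ⟨koch_self, ?_⟩
  intro K hne hK hfix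
  -- K is bounded
  obtain ⟨R₀, hR₀⟩ := hK.isBounded.subset_closedBall 0
  set R : ℝ := max R₀ 0 with hRdef
  have hR : 0 ≤ R := le_max_right _ _
  have hKR : K ⊆ Set.Icc (-R) (1 + R) := by
    intro x hx
    have := hR₀ hx
    rw [Metric.mem_closedBall, Real.dist_eq, sub_zero] at this
    have h1 : |x| ≤ R := this.trans (le_max_left _ _)
    have h2 := abs_le.mp h1
    exact ⟨h2.1, by linarith [h2.2]⟩
  -- shrinking bounds
  have hshrink : ∀ n : ℕ, K ⊆ Set.Icc (-(R * (1/3)^n)) (1 + R * (1/3)^n) := by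
    intro n
    induction n with
    | zero => simpa using hKR
    | succ n ih =>
      intro x hx
      rw [hfix] at hx
      simp only [Set.mem_iUnion, Set.mem_image] at hx
      obtain ⟨i, y, hy, rfl⟩ := hx
      obtain ⟨hy0, hy1⟩ := ih hy
      have hRe : 0 ≤ R * (1/3)^n := mul_nonneg hR (by positivity)
      have hpow : (1/3 : ℝ)^(n+1) = (1/3)^n * (1/3) := pow_succ _ _
      fin_cases i
      · rw [show (⟨0, by omega⟩ : Fin 4) = 0 from rfl, kochIFS_zero]
        rw [Set.mem_Icc, hpow]; constructor <;> linarith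
      · rw [show (⟨1, by omega⟩ : Fin 4) = 1 from rfl, kochIFS_one]
        rw [Set.mem_Icc, hpow]; constructor <;> linarith
      · rw [show (⟨2, by omega⟩ : Fin 4) = 2 from rfl, kochIFS_two]
        rw [Set.mem_Icc, hpow]; constructor <;> linarith
      · rw [show (⟨3, by omega⟩ : Fin 4) = 3 from rfl, kochIFS_three]
        rw [Set.mem_Icc, hpow]; constructor <;> linarith
  -- K ⊆ [0,1]
  have hsub : K ⊆ Set.Icc (0 : ℝ) 1 := by
    intro x hx
    have hlim : Filter.Tendsto (fun n : ℕ => R * (1/3)^n) Filter.atTop (nhds 0) := by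
      have : Filter.Tendsto (fun n : ℕ => (1/3 : ℝ)^n) Filter.atTop (nhds 0) :=
        tendsto_pow_atTop_nhds_zero_of_lt_one (by norm_num) (by norm_num)
      simpa using this.const_mul R
    constructor
    · have hlim' : Filter.Tendsto (fun n : ℕ => -(R * (1/3)^n)) Filter.atTop (nhds 0) := by
        simpa using hlim.neg
      exact le_of_tendsto hlim' (Filter.Eventually.of_forall fun n => (hshrink n hx).1)
    · have hlim' : Filter.Tendsto (fun n : ℕ => 1 + R * (1/3)^n) Filter.atTop (nhds 1) := by
        simpa using (tendsto_const_nhds.add hlim)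
      exact ge_of_tendsto hlim' (Filter.Eventually.of_forall fun n => (hshrink n hx).2)
  -- each map sends K into K
  have hmap : ∀ i : Fin 4, ∀ y ∈ K, kochIFS i y ∈ K := by
    intro i y hy
    rw [hfix]
    exact Set.mem_iUnion.mpr ⟨i, Set.mem_image_of_mem _ hy⟩
  obtain ⟨x₀, hx₀⟩ := hne
  -- approximation
  have happrox : ∀ n : ℕ, ∀ t ∈ Set.Icc (0:ℝ) 1, ∃ y ∈ K, |t - y| ≤ (1/3)^n := by
    intro n
    induction n with
    | zero =>
      intro t ht
      refine ⟨x₀, hx₀, ?_⟩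
      have h1 := hsub hx₀
      rw [abs_le]
      have := ht.1; have := ht.2; have := h1.1; have := h1.2
      constructor <;> simp <;> linarith
    | succ n ih =>
      intro t ht
      rw [koch_self] at ht
      simp only [Set.mem_iUnion, Set.mem_image] at ht
      obtain ⟨i, s, hs, rfl⟩ := ht
      obtain ⟨y, hy, hdy⟩ := ih s hs
      refine ⟨kochIFS i y, hmap i y hy, ?_⟩
      have hpow : (1/3 : ℝ)^(n+1) = (1/3)^n * (1/3) := pow_succ _ _
      have habs := abs_nonneg (s - y)
      fin_cases i
      · rw [show (⟨0, by omega⟩ : Fin 4) = 0 from rfl, kochIFS_zero, kochIFS_zero,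
          show s/3 - y/3 = (s - y)/3 by ring, abs_div, abs_of_pos (by norm_num : (0:ℝ) < 3), hpow]
        linarith
      · rw [show (⟨1, by omega⟩ : Fin 4) = 1 from rfl, kochIFS_one, kochIFS_one,
          show s/6 + 1/3 - (y/6 + 1/3) = (s - y)/6 by ring, abs_div,
          abs_of_pos (by norm_num : (0:ℝ) < 6), hpow]
        linarith
      · rw [show (⟨2, by omega⟩ : Fin 4) = 2 from rfl, kochIFS_two, kochIFS_two,
          show -s/6 + 2/3 - (-y/6 + 2/3) = -((s - y)/6) by ring, abs_neg, abs_div,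
          abs_of_pos (by norm_num : (0:ℝ) < 6), hpow]
        linarith
      · rw [show (⟨3, by omega⟩ : Fin 4) = 3 from rfl, kochIFS_three, kochIFS_three,
          show s/3 + 2/3 - (y/3 + 2/3) = (s - y)/3 by ring, abs_div,
          abs_of_pos (by norm_num : (0:ℝ) < 3), hpow]
        linarith
  -- conclude
  apply Set.Subset.antisymm hsub
  intro t ht
  rw [← hK.isClosed.closure_eq, Metric.mem_closure_iff]
  intro ε hε
  obtain ⟨n, hn⟩ := exists_pow_lt_of_lt_one hε (by norm_num : (1/3 : ℝ) < 1)
  obtain ⟨y, hy, hdy⟩ := happrox n t ht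
  exact ⟨y, hy, by rw [Real.dist_eq]; exact lt_of_le_of_lt hdy hn⟩
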